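/- Let M = [[F, H, E], [A, G, B], [C, K, D], [J, I, L]] be a real matrix of rank r where F, A, G, K, D, L are fixed (staircase pattern) and the remaining blocks are unknown. Then M is the unique rank-≤-r matrix with those fixed blocks if and only if rank(A) = rank(G) = rank(K) = rank(D) = r. -/

import Mathlib

open Matrix

/-- A 3×3 block matrix. -/
def block3 {m1 m2 m3 n1 n2 n3 : ℕ}
    (A11 : Matrix (Fin m1) (Fin n1) ℝ) (A12 : Matrix (Fin m1) (Fin n2) ℝ)
    (A13 : Matrix (Fin m1) (Fin n3) ℝ)
    (A21 : Matrix (Fin m2) (Fin n1) ℝ) (A22 : Matrix (Fin m2) (Fin n2) ℝ)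
    (A23 : Matrix (Fin m2) (Fin n3) ℝ)
    (A31 : Matrix (Fin m3) (Fin n1) ℝ) (A32 : Matrix (Fin m3) (Fin n2) ℝ)
    (A33 : Matrix (Fin m3) (Fin n3) ℝ) :
    Matrix ((Fin m1 ⊕ Fin m2) ⊕ Fin m3) ((Fin n1 ⊕ Fin n2) ⊕ Fin n3) ℝ :=
  Matrix.fromBlocks (Matrix.fromBlocks A11 A12 A21 A22) (Matrix.fromRows A13 A23)
    (Matrix.fromCols A31 A32) A33

/-- A 4×3 block matrix: a 3×3 block matrix stacked on a fourth block row. -/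
def block43 {m1 m2 m3 m4 n1 n2 n3 : ℕ}
    (A11 : Matrix (Fin m1) (Fin n1) ℝ) (A12 : Matrix (Fin m1) (Fin n2) ℝ)
    (A13 : Matrix (Fin m1) (Fin n3) ℝ)
    (A21 : Matrix (Fin m2) (Fin n1) ℝ) (A22 : Matrix (Fin m2) (Fin n2) ℝ)
    (A23 : Matrix (Fin m2) (Fin n3) ℝ)
    (A31 : Matrix (Fin m3) (Fin n1) ℝ) (A32 : Matrix (Fin m3) (Fin n2) ℝ)
    (A33 : Matrix (Fin m3) (Fin n3) ℝ)
    (A41 : Matrix (Fin m4) (Fin n1) ℝ) (A42 : Matrix (Fin m4) (Fin n2) ℝ)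
    (A43 : Matrix (Fin m4) (Fin n3) ℝ) :
    Matrix (((Fin m1 ⊕ Fin m2) ⊕ Fin m3) ⊕ Fin m4) ((Fin n1 ⊕ Fin n2) ⊕ Fin n3) ℝ :=
  Matrix.fromRows (block3 A11 A12 A13 A21 A22 A23 A31 A32 A33)
    (Matrix.fromCols (Matrix.fromCols A41 A42) A43)

namespace StaircaseAux

section RankTools

variable {ι κ : Type*} [Fintype ι] [Fintype κ]

lemma my_rank_factor [DecidableEq κ] {r : ℕ} (N : Matrix ι κ ℝ) (h : N.rank ≤ r) :
    ∃ (P : Matrix ι (Fin r) ℝ) (Q : Matrix (Fin r) κ ℝ), N = P * Q := by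
  classical
  set V := LinearMap.range N.mulVecLin with hVdef
  have hV : Module.finrank ℝ V = N.rank := rfl
  let b : Module.Basis (Fin N.rank) ℝ V := (Module.finBasis ℝ V).reindex (finCongr hV)
  have hcol : ∀ j : κ, (fun i => N i j) ∈ V := by
    intro j
    refine ⟨Pi.single j 1, ?_⟩
    ext i
    simp [mulVecLin_apply, mulVec, dotProduct_single]
  let col : κ → V := fun j => ⟨fun i => N i j, hcol j⟩
  refine ⟨Matrix.of fun i k => if hk : (k : ℕ) < N.rank then ((b ⟨k, hk⟩ : V) : ι → ℝ) i else 0,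
    Matrix.of fun k j => if hk : (k : ℕ) < N.rank then b.repr (col j) ⟨k, hk⟩ else 0, ?_⟩
  ext i j
  rw [Matrix.mul_apply]
  set f : Fin r → ℝ := fun k =>
      (if hk : (k : ℕ) < N.rank then ((b ⟨k, hk⟩ : V) : ι → ℝ) i else 0) *
      (if hk : (k : ℕ) < N.rank then b.repr (col j) ⟨k, hk⟩ else 0) with hf
  show N i j = ∑ k : Fin r, f k
  have h1 : ∑ k ∈ (Finset.univ.map (Fin.castLEOrderEmb h).toEmbedding), f k
      = ∑ k : Fin r, f k := by
    apply Finset.sum_subset (Finset.subset_univ _)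
    intro k _ hk
    have hnot : ¬ ((k : ℕ) < N.rank) := by
      intro hlt
      exact hk (Finset.mem_map.mpr ⟨⟨k, hlt⟩, Finset.mem_univ _, by
        rfl⟩)
    simp [hf, hnot]
  have h2 : ∑ k ∈ (Finset.univ.map (Fin.castLEOrderEmb h).toEmbedding), f k
      = ∑ k' : Fin N.rank, ((b k' : V) : ι → ℝ) i * b.repr (col j) k' := by
    rw [Finset.sum_map]
    apply Finset.sum_congr rfl
    intro k' _
    have hk : ((Fin.castLEOrderEmb h).toEmbedding k' : ℕ) < N.rank := by
      exact k'.isLt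
    show f (Fin.castLE h k') = _
    have hk : ((Fin.castLE h k' : Fin r) : ℕ) < N.rank := k'.isLt
    rw [hf]
    simp only []
    rw [dif_pos hk, dif_pos hk]
    rfl
  rw [← h1, h2]
  have hrepr := b.sum_repr (col j)
  have := congrArg (fun (v : V) => (v : ι → ℝ) i) hrepr
  simp only [AddSubmonoidClass.coe_finset_sum, Finset.sum_apply, SetLike.val_smul,
    Pi.smul_apply, smul_eq_mul] at this
  refine this.symm.trans ?_
  apply Finset.sum_congr rfl
  intro k' _
  ring

lemma my_left_inv {r : ℕ} (P : Matrix ι (Fin r) ℝ) (h : P.rank = r) :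
    ∃ Lm : Matrix (Fin r) ι ℝ, Lm * P = 1 := by
  classical
  have hrt : Pᵀ.rank = r := by rw [Matrix.rank_transpose]; exact h
  have htop : LinearMap.range Pᵀ.mulVecLin = ⊤ := by
    apply Submodule.eq_top_of_finrank_eq
    have h1 : Module.finrank ℝ (LinearMap.range Pᵀ.mulVecLin) = Pᵀ.rank := rfl
    rw [h1, hrt]
    simp [Module.finrank_pi]
  have hsurj : Function.Surjective (fun x : ι → ℝ => Pᵀ.mulVec x) := by
    intro w
    have : w ∈ LinearMap.range Pᵀ.mulVecLin := htop ▸ Submodule.mem_top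
    obtain ⟨x, hx⟩ := this
    refine ⟨x, ?_⟩
    show Pᵀ *ᵥ x = w
    rw [← mulVecLin_apply]; exact hx
  choose g hg using hsurj
  refine ⟨Matrix.of (fun k i => g (Pi.single k 1) i), ?_⟩
  ext k l
  rw [Matrix.mul_apply]
  simp only [Matrix.of_apply]
  calc ∑ i, g (Pi.single k 1) i * P i l
      = Pᵀ.mulVec (g (Pi.single k 1)) l := by
        simp [Matrix.mulVec, dotProduct, Matrix.transpose_apply, mul_comm]
    _ = (Pi.single k 1 : Fin r → ℝ) l := by exact congrFun (hg _) l
    _ = (1 : Matrix (Fin r) (Fin r) ℝ) k l := by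
        simp [Pi.single_apply, Matrix.one_apply, eq_comm]

lemma my_right_inv [DecidableEq κ] {r : ℕ} (Q : Matrix (Fin r) κ ℝ) (h : Q.rank = r) :
    ∃ Rm : Matrix κ (Fin r) ℝ, Q * Rm = 1 := by
  classical
  have htop : LinearMap.range Q.mulVecLin = ⊤ := by
    apply Submodule.eq_top_of_finrank_eq
    have h1 : Module.finrank ℝ (LinearMap.range Q.mulVecLin) = Q.rank := rfl
    rw [h1, h]
    simp [Module.finrank_pi]
  have hsurj : Function.Surjective (fun x : κ → ℝ => Q.mulVec x) := by
    intro w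
    have : w ∈ LinearMap.range Q.mulVecLin := htop ▸ Submodule.mem_top
    obtain ⟨x, hx⟩ := this
    refine ⟨x, ?_⟩
    show Q *ᵥ x = w
    rw [← mulVecLin_apply]; exact hx
  choose g hg using hsurj
  refine ⟨Matrix.of (fun j k => g (Pi.single k 1) j), ?_⟩
  ext k l
  rw [Matrix.mul_apply]
  simp only [Matrix.of_apply]
  have h3 := congrFun (hg (Pi.single l 1)) k
  simp only [Matrix.mulVec, dotProduct] at h3
  rw [h3]
  simp [Pi.single_apply, Matrix.one_apply]

lemma my_mulVec_ker {r : ℕ} (P : Matrix ι (Fin r) ℝ) (h : P.rank < r) :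
    ∃ v : Fin r → ℝ, v ≠ 0 ∧ P.mulVec v = 0 := by
  have hk : LinearMap.ker P.mulVecLin ≠ ⊥ := by
    intro hbot
    have h1 := LinearMap.finrank_range_add_finrank_ker P.mulVecLin
    rw [hbot, finrank_bot] at h1
    have h2 : Module.finrank ℝ (LinearMap.range P.mulVecLin) = P.rank := rfl
    rw [h2] at h1
    simp [Module.finrank_pi] at h1
    omega
  obtain ⟨v, hv, hvne⟩ := Submodule.exists_mem_ne_zero_of_ne_bot hk
  exact ⟨v, hvne, by rw [← mulVecLin_apply]; exact hv⟩

lemma my_vecMul_ker {r : ℕ} (Q : Matrix (Fin r) κ ℝ) (h : Q.rank < r) :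
    ∃ u : Fin r → ℝ, u ≠ 0 ∧ Matrix.vecMul u Q = 0 := by
  have : Qᵀ.rank < r := by rw [Matrix.rank_transpose]; exact h
  obtain ⟨u, hu, hker⟩ := my_mulVec_ker Qᵀ this
  refine ⟨u, hu, ?_⟩
  rw [← Matrix.mulVec_transpose]
  exact hker

lemma rank_left_of_mul {r : ℕ} (X : Matrix ι (Fin r) ℝ) (Y : Matrix (Fin r) κ ℝ)
    (h : (X * Y).rank = r) : X.rank = r :=
  le_antisymm (by simpa using X.rank_le_card_width)
    (le_trans (le_of_eq h.symm) (Matrix.rank_mul_le_left X Y))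

lemma rank_right_of_mul {r : ℕ} (X : Matrix ι (Fin r) ℝ) (Y : Matrix (Fin r) κ ℝ)
    (h : (X * Y).rank = r) : Y.rank = r :=
  le_antisymm (by simpa using Y.rank_le_card_height)
    (le_trans (le_of_eq h.symm) (Matrix.rank_mul_le_right X Y))

lemma rank_split [DecidableEq κ] {r : ℕ} (X : Matrix ι (Fin r) ℝ) (Y : Matrix (Fin r) κ ℝ)
    (h : (X * Y).rank < r) : X.rank < r ∨ Y.rank < r := by
  by_contra hc
  push_neg at hc
  obtain ⟨h1, h2⟩ := hc
  have hx : X.rank = r := le_antisymm (by simpa using X.rank_le_card_width) h1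
  have hy : Y.rank = r := le_antisymm (by simpa using Y.rank_le_card_height) h2
  obtain ⟨Lx, hLx⟩ := my_left_inv X hx
  obtain ⟨Ry, hRy⟩ := my_right_inv Y hy
  have h1r : Lx * ((X * Y) * Ry) = 1 := by
    rw [Matrix.mul_assoc X Y Ry, hRy, Matrix.mul_one, hLx]
  have hge : r ≤ (X * Y).rank := by
    have h4 : (Lx * ((X * Y) * Ry)).rank = r := by rw [h1r]; simp
    calc r = (Lx * ((X * Y) * Ry)).rank := h4.symm
      _ ≤ ((X * Y) * Ry).rank := Matrix.rank_mul_le_right _ _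
      _ ≤ (X * Y).rank := Matrix.rank_mul_le_left _ _
  omega

end RankTools


variable {m1 m2 m3 m4 n1 n2 n3 : ℕ}

def ri1 {m1 m2 m3 m4 : ℕ} (a : Fin m1) : ((Fin m1 ⊕ Fin m2) ⊕ Fin m3) ⊕ Fin m4 :=
  Sum.inl (Sum.inl (Sum.inl a))
def ri2 {m1 m2 m3 m4 : ℕ} (a : Fin m2) : ((Fin m1 ⊕ Fin m2) ⊕ Fin m3) ⊕ Fin m4 :=
  Sum.inl (Sum.inl (Sum.inr a))
def ri3 {m1 m2 m3 m4 : ℕ} (a : Fin m3) : ((Fin m1 ⊕ Fin m2) ⊕ Fin m3) ⊕ Fin m4 :=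
  Sum.inl (Sum.inr a)
def ri4 {m1 m2 m3 m4 : ℕ} (a : Fin m4) : ((Fin m1 ⊕ Fin m2) ⊕ Fin m3) ⊕ Fin m4 :=
  Sum.inr a
def ci1 {n1 n2 n3 : ℕ} (b : Fin n1) : (Fin n1 ⊕ Fin n2) ⊕ Fin n3 := Sum.inl (Sum.inl b)
def ci2 {n1 n2 n3 : ℕ} (b : Fin n2) : (Fin n1 ⊕ Fin n2) ⊕ Fin n3 := Sum.inl (Sum.inr b)
def ci3 {n1 n2 n3 : ℕ} (b : Fin n3) : (Fin n1 ⊕ Fin n2) ⊕ Fin n3 := Sum.inr b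

section ApplyLemmas
variable (A11 : Matrix (Fin m1) (Fin n1) ℝ) (A12 : Matrix (Fin m1) (Fin n2) ℝ)
    (A13 : Matrix (Fin m1) (Fin n3) ℝ)
    (A21 : Matrix (Fin m2) (Fin n1) ℝ) (A22 : Matrix (Fin m2) (Fin n2) ℝ)
    (A23 : Matrix (Fin m2) (Fin n3) ℝ)
    (A31 : Matrix (Fin m3) (Fin n1) ℝ) (A32 : Matrix (Fin m3) (Fin n2) ℝ)
    (A33 : Matrix (Fin m3) (Fin n3) ℝ)
    (A41 : Matrix (Fin m4) (Fin n1) ℝ) (A42 : Matrix (Fin m4) (Fin n2) ℝ)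
    (A43 : Matrix (Fin m4) (Fin n3) ℝ)

@[simp] lemma b43_11 (a b) :
    block43 A11 A12 A13 A21 A22 A23 A31 A32 A33 A41 A42 A43 (ri1 a) (ci1 b) = A11 a b := rfl
@[simp] lemma b43_12 (a b) :
    block43 A11 A12 A13 A21 A22 A23 A31 A32 A33 A41 A42 A43 (ri1 a) (ci2 b) = A12 a b := rfl
@[simp] lemma b43_13 (a b) :
    block43 A11 A12 A13 A21 A22 A23 A31 A32 A33 A41 A42 A43 (ri1 a) (ci3 b) = A13 a b := rfl
@[simp] lemma b43_21 (a b) :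
    block43 A11 A12 A13 A21 A22 A23 A31 A32 A33 A41 A42 A43 (ri2 a) (ci1 b) = A21 a b := rfl
@[simp] lemma b43_22 (a b) :
    block43 A11 A12 A13 A21 A22 A23 A31 A32 A33 A41 A42 A43 (ri2 a) (ci2 b) = A22 a b := rfl
@[simp] lemma b43_23 (a b) :
    block43 A11 A12 A13 A21 A22 A23 A31 A32 A33 A41 A42 A43 (ri2 a) (ci3 b) = A23 a b := rfl
@[simp] lemma b43_31 (a b) :
    block43 A11 A12 A13 A21 A22 A23 A31 A32 A33 A41 A42 A43 (ri3 a) (ci1 b) = A31 a b := rfl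
@[simp] lemma b43_32 (a b) :
    block43 A11 A12 A13 A21 A22 A23 A31 A32 A33 A41 A42 A43 (ri3 a) (ci2 b) = A32 a b := rfl
@[simp] lemma b43_33 (a b) :
    block43 A11 A12 A13 A21 A22 A23 A31 A32 A33 A41 A42 A43 (ri3 a) (ci3 b) = A33 a b := rfl
@[simp] lemma b43_41 (a b) :
    block43 A11 A12 A13 A21 A22 A23 A31 A32 A33 A41 A42 A43 (ri4 a) (ci1 b) = A41 a b := rfl
@[simp] lemma b43_42 (a b) :
    block43 A11 A12 A13 A21 A22 A23 A31 A32 A33 A41 A42 A43 (ri4 a) (ci2 b) = A42 a b := rfl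
@[simp] lemma b43_43 (a b) :
    block43 A11 A12 A13 A21 A22 A23 A31 A32 A33 A41 A42 A43 (ri4 a) (ci3 b) = A43 a b := rfl

end ApplyLemmas

lemma block43_eta (N : Matrix (((Fin m1 ⊕ Fin m2) ⊕ Fin m3) ⊕ Fin m4)
    ((Fin n1 ⊕ Fin n2) ⊕ Fin n3) ℝ) :
    block43 (Matrix.of fun a b => N (ri1 a) (ci1 b)) (Matrix.of fun a b => N (ri1 a) (ci2 b))
      (Matrix.of fun a b => N (ri1 a) (ci3 b)) (Matrix.of fun a b => N (ri2 a) (ci1 b))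
      (Matrix.of fun a b => N (ri2 a) (ci2 b)) (Matrix.of fun a b => N (ri2 a) (ci3 b))
      (Matrix.of fun a b => N (ri3 a) (ci1 b)) (Matrix.of fun a b => N (ri3 a) (ci2 b))
      (Matrix.of fun a b => N (ri3 a) (ci3 b)) (Matrix.of fun a b => N (ri4 a) (ci1 b))
      (Matrix.of fun a b => N (ri4 a) (ci2 b)) (Matrix.of fun a b => N (ri4 a) (ci3 b)) = N := by
  ext i j
  rcases i with ((a | a) | a) | a <;> rcases j with (b | b) | b <;> rfl

lemma mul_blk {τ : Type*} [Fintype τ] {ι κ : Type*} (P : Matrix ι τ ℝ) (Q : Matrix τ κ ℝ)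
    {a b : ℕ} (f : Fin a → ι) (g : Fin b → κ) :
    Matrix.of (fun x y => (P * Q) (f x) (g y)) = (P.submatrix f id) * (Q.submatrix id g) := by
  ext x y
  simp [Matrix.mul_apply]

lemma vmv_mul {τ ι κ : Type*} [Fintype τ] (x : ι → ℝ) (u : τ → ℝ) (Q : Matrix τ κ ℝ) :
    vecMulVec x u * Q = vecMulVec x (u ᵥ* Q) := by
  ext i j
  simp [vecMulVec_apply, Matrix.mul_apply, Matrix.vecMul, dotProduct, Finset.mul_sum,
    mul_assoc]

lemma mul_vmv {τ ι κ : Type*} [Fintype τ] (P : Matrix ι τ ℝ) (v : τ → ℝ) (y : κ → ℝ) :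
    P * vecMulVec v y = vecMulVec (P *ᵥ v) y := by
  ext i j
  simp only [vecMulVec_apply, Matrix.mul_apply, Matrix.mulVec, dotProduct]
  rw [Finset.sum_mul]
  apply Finset.sum_congr rfl
  intro k _
  ring

lemma vmv_mul_vmv {τ ι κ : Type*} [Fintype τ] (x : ι → ℝ) (u v : τ → ℝ) (y : κ → ℝ) :
    vecMulVec x u * vecMulVec v y = (u ⬝ᵥ v) • vecMulVec x y := by
  ext i j
  simp [vecMulVec_apply, Matrix.mul_apply, dotProduct, Finset.sum_mul, Finset.mul_sum]
  ring_nf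
  apply Finset.sum_congr rfl
  intro k _
  ring

lemma pert_expand {τ ι κ : Type*} [Fintype τ] (P : Matrix ι τ ℝ) (Q : Matrix τ κ ℝ)
    (x : ι → ℝ) (u v : τ → ℝ) (y : κ → ℝ) :
    (P + vecMulVec x u) * (Q + vecMulVec v y)
      = P * Q + (vecMulVec x (u ᵥ* Q) + vecMulVec (P *ᵥ v) y + (u ⬝ᵥ v) • vecMulVec x y) := by
  rw [Matrix.add_mul, Matrix.mul_add, Matrix.mul_add, vmv_mul, mul_vmv, vmv_mul_vmv]
  abel

lemma blk_factor {ι κ τ : Type*} [Fintype τ] {a b : ℕ} (N : Matrix ι κ ℝ)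
    (P : Matrix ι τ ℝ) (Q : Matrix τ κ ℝ) (hPQ : N = P * Q) (f : Fin a → ι) (g : Fin b → κ)
    (X : Matrix (Fin a) (Fin b) ℝ) (h : ∀ x y, N (f x) (g y) = X x y) :
    X = P.submatrix f id * Q.submatrix id g := by
  ext x y
  rw [← h x y, hPQ, Matrix.mul_apply, Matrix.mul_apply]
  simp

end StaircaseAux

open StaircaseAux

/-- For `M = [[F,H,E],[A,G,B],[C,K,D],[J,I,L]]` of rank `r` with the staircase blocks
`F, A, G, K, D, L` fixed, the completion is unique iff
`rank A = rank G = rank K = rank D = r`. -/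
theorem staircase_four_unique_iff {m1 m2 m3 m4 n1 n2 n3 r : ℕ}
    (hm1 : 0 < m1) (hm2 : 0 < m2) (hm3 : 0 < m3) (hm4 : 0 < m4)
    (hn1 : 0 < n1) (hn2 : 0 < n2) (hn3 : 0 < n3) (hr : 1 ≤ r)
    (F : Matrix (Fin m1) (Fin n1) ℝ) (H : Matrix (Fin m1) (Fin n2) ℝ)
    (E : Matrix (Fin m1) (Fin n3) ℝ)
    (A : Matrix (Fin m2) (Fin n1) ℝ) (G : Matrix (Fin m2) (Fin n2) ℝ)
    (B : Matrix (Fin m2) (Fin n3) ℝ)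
    (C : Matrix (Fin m3) (Fin n1) ℝ) (K : Matrix (Fin m3) (Fin n2) ℝ)
    (D : Matrix (Fin m3) (Fin n3) ℝ)
    (J : Matrix (Fin m4) (Fin n1) ℝ) (I : Matrix (Fin m4) (Fin n2) ℝ)
    (L : Matrix (Fin m4) (Fin n3) ℝ)
    (hM : (block43 F H E A G B C K D J I L).rank = r) :
    (∀ (H' : Matrix (Fin m1) (Fin n2) ℝ) (E' : Matrix (Fin m1) (Fin n3) ℝ)
        (B' : Matrix (Fin m2) (Fin n3) ℝ) (C' : Matrix (Fin m3) (Fin n1) ℝ)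
        (J' : Matrix (Fin m4) (Fin n1) ℝ) (I' : Matrix (Fin m4) (Fin n2) ℝ),
        (block43 F H' E' A G B' C' K D J' I' L).rank ≤ r →
          H' = H ∧ E' = E ∧ B' = B ∧ C' = C ∧ J' = J ∧ I' = I) ↔
      A.rank = r ∧ G.rank = r ∧ K.rank = r ∧ D.rank = r := by
  constructor
  · intro hu
    obtain ⟨P, Q, hPQ⟩ := my_rank_factor _ (le_of_eq hM)
    set P2 := P.submatrix (ri2 (m1 := m1) (m3 := m3) (m4 := m4)) id with hP2def
    set P3 := P.submatrix (ri3 (m1 := m1) (m2 := m2) (m4 := m4)) id with hP3def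
    set Q1 := Q.submatrix id (ci1 (n2 := n2) (n3 := n3)) with hQ1def
    set Q2 := Q.submatrix id (ci2 (n1 := n1) (n3 := n3)) with hQ2def
    set Q3 := Q.submatrix id (ci3 (n1 := n1) (n2 := n2)) with hQ3def
    have eA : A = P2 * Q1 := blk_factor _ P Q hPQ _ _ A (fun x y => rfl)
    have eG : G = P2 * Q2 := blk_factor _ P Q hPQ _ _ G (fun x y => rfl)
    have eK : K = P3 * Q2 := blk_factor _ P Q hPQ _ _ K (fun x y => rfl)
    have eD : D = P3 * Q3 := blk_factor _ P Q hPQ _ _ D (fun x y => rfl)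
    have hPr : P.rank = r := rank_left_of_mul P Q (by rw [← hPQ]; exact hM)
    have hQr : Q.rank = r := rank_right_of_mul P Q (by rw [← hPQ]; exact hM)
    obtain ⟨LP, hLP⟩ := my_left_inv P hPr
    obtain ⟨RQ, hRQ⟩ := my_right_inv Q hQr
    have hPinj : ∀ v : Fin r → ℝ, P *ᵥ v = 0 → v = 0 := by
      intro v hv
      calc v = (1 : Matrix (Fin r) (Fin r) ℝ) *ᵥ v := (Matrix.one_mulVec v).symm
        _ = (LP * P) *ᵥ v := by rw [hLP]
        _ = LP *ᵥ (P *ᵥ v) := (Matrix.mulVec_mulVec v LP P).symm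
        _ = LP *ᵥ 0 := by rw [hv]
        _ = 0 := Matrix.mulVec_zero LP
    have hQinj : ∀ u : Fin r → ℝ, u ᵥ* Q = 0 → u = 0 := by
      intro u hv
      calc u = u ᵥ* (1 : Matrix (Fin r) (Fin r) ℝ) := (Matrix.vecMul_one u).symm
        _ = u ᵥ* (Q * RQ) := by rw [hRQ]
        _ = (u ᵥ* Q) ᵥ* RQ := (Matrix.vecMul_vecMul u Q RQ).symm
        _ = (0 : ((Fin n1 ⊕ Fin n2) ⊕ Fin n3) → ℝ) ᵥ* RQ := by rw [hv]
        _ = 0 := Matrix.zero_vecMul RQ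
    -- strengthened uniqueness
    have hu' : ∀ N : Matrix (((Fin m1 ⊕ Fin m2) ⊕ Fin m3) ⊕ Fin m4)
        ((Fin n1 ⊕ Fin n2) ⊕ Fin n3) ℝ, N.rank ≤ r →
        (∀ a b, N (ri1 a) (ci1 b) = F a b) → (∀ a b, N (ri2 a) (ci1 b) = A a b) →
        (∀ a b, N (ri2 a) (ci2 b) = G a b) → (∀ a b, N (ri3 a) (ci2 b) = K a b) →
        (∀ a b, N (ri3 a) (ci3 b) = D a b) → (∀ a b, N (ri4 a) (ci3 b) = L a b) →
        N = block43 F H E A G B C K D J I L := by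
      intro N hrank h11 h21 h22 h32 h33 h43
      have hNeta := block43_eta N
      have gF : (Matrix.of fun a b => N (ri1 a) (ci1 b)) = F := by ext a b; exact h11 a b
      have gA : (Matrix.of fun a b => N (ri2 a) (ci1 b)) = A := by ext a b; exact h21 a b
      have gG : (Matrix.of fun a b => N (ri2 a) (ci2 b)) = G := by ext a b; exact h22 a b
      have gK : (Matrix.of fun a b => N (ri3 a) (ci2 b)) = K := by ext a b; exact h32 a b
      have gD : (Matrix.of fun a b => N (ri3 a) (ci3 b)) = D := by ext a b; exact h33 a b
      have gL : (Matrix.of fun a b => N (ri4 a) (ci3 b)) = L := by ext a b; exact h43 a b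
      rw [gF, gA, gG, gK, gD, gL] at hNeta
      obtain ⟨e12, e13, e23, e31, e41, e42⟩ := hu _ _ _ _ _ _ (by rw [hNeta]; exact hrank)
      rw [e12, e13, e23, e31, e41, e42] at hNeta
      exact hNeta.symm
    -- general rank-preserving rank-one style perturbation
    have pert : ∀ (x : (((Fin m1 ⊕ Fin m2) ⊕ Fin m3) ⊕ Fin m4) → ℝ) (u v : Fin r → ℝ)
        (y : ((Fin n1 ⊕ Fin n2) ⊕ Fin n3) → ℝ),
        (∀ a b, x (ri1 a) * (u ᵥ* Q) (ci1 b) + (P *ᵥ v) (ri1 a) * y (ci1 b)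
            + (u ⬝ᵥ v) * (x (ri1 a) * y (ci1 b)) = 0) →
        (∀ a b, x (ri2 a) * (u ᵥ* Q) (ci1 b) + (P *ᵥ v) (ri2 a) * y (ci1 b)
            + (u ⬝ᵥ v) * (x (ri2 a) * y (ci1 b)) = 0) →
        (∀ a b, x (ri2 a) * (u ᵥ* Q) (ci2 b) + (P *ᵥ v) (ri2 a) * y (ci2 b)
            + (u ⬝ᵥ v) * (x (ri2 a) * y (ci2 b)) = 0) →
        (∀ a b, x (ri3 a) * (u ᵥ* Q) (ci2 b) + (P *ᵥ v) (ri3 a) * y (ci2 b)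
            + (u ⬝ᵥ v) * (x (ri3 a) * y (ci2 b)) = 0) →
        (∀ a b, x (ri3 a) * (u ᵥ* Q) (ci3 b) + (P *ᵥ v) (ri3 a) * y (ci3 b)
            + (u ⬝ᵥ v) * (x (ri3 a) * y (ci3 b)) = 0) →
        (∀ a b, x (ri4 a) * (u ᵥ* Q) (ci3 b) + (P *ᵥ v) (ri4 a) * y (ci3 b)
            + (u ⬝ᵥ v) * (x (ri4 a) * y (ci3 b)) = 0) →
        ∀ i j, x i * (u ᵥ* Q) j + (P *ᵥ v) i * y j + (u ⬝ᵥ v) * (x i * y j) = 0 := by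
      intro x u v y c11 c21 c22 c32 c33 c43
      set Δ : Matrix (((Fin m1 ⊕ Fin m2) ⊕ Fin m3) ⊕ Fin m4) ((Fin n1 ⊕ Fin n2) ⊕ Fin n3) ℝ :=
        Matrix.of (fun i j => x i * (u ᵥ* Q) j + (P *ᵥ v) i * y j + (u ⬝ᵥ v) * (x i * y j))
        with hΔ
      have hNM : (P + vecMulVec x u) * (Q + vecMulVec v y)
          = block43 F H E A G B C K D J I L + Δ := by
        rw [pert_expand, ← hPQ, hΔ]
        congr 1
      have hrank : ((P + vecMulVec x u) * (Q + vecMulVec v y)).rank ≤ r := by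
        exact le_trans (Matrix.rank_mul_le_left _ _)
          (by simpa using Matrix.rank_le_card_width (P + vecMulVec x u))
      have hNeq : (P + vecMulVec x u) * (Q + vecMulVec v y)
          = block43 F H E A G B C K D J I L := by
        apply hu' _ hrank
        · intro a b
          rw [hNM, Matrix.add_apply]
          simp only [hΔ, Matrix.of_apply]
          rw [c11 a b, add_zero]
          rfl
        · intro a b
          rw [hNM, Matrix.add_apply]
          simp only [hΔ, Matrix.of_apply]
          rw [c21 a b, add_zero]
          rfl
        · intro a b
          rw [hNM, Matrix.add_apply]
          simp only [hΔ, Matrix.of_apply]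
          rw [c22 a b, add_zero]
          rfl
        · intro a b
          rw [hNM, Matrix.add_apply]
          simp only [hΔ, Matrix.of_apply]
          rw [c32 a b, add_zero]
          rfl
        · intro a b
          rw [hNM, Matrix.add_apply]
          simp only [hΔ, Matrix.of_apply]
          rw [c33 a b, add_zero]
          rfl
        · intro a b
          rw [hNM, Matrix.add_apply]
          simp only [hΔ, Matrix.of_apply]
          rw [c43 a b, add_zero]
          rfl
      have hzero : Δ = 0 := by
        have h0 : block43 F H E A G B C K D J I L + Δ
            = block43 F H E A G B C K D J I L := by rw [← hNM, hNeq]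
        calc Δ = block43 F H E A G B C K D J I L + Δ
              - block43 F H E A G B C K D J I L := by abel
          _ = 0 := by rw [h0]; abel
      intro i j
      have := congrFun (congrFun hzero i) j
      simpa [hΔ] using this
    have cancel_aux : ∀ p t s w : ℝ, s ≠ 0 → w = s - 1 →
        p * t + p * (-s⁻¹ * t) + w * (p * (-s⁻¹ * t)) = 0 := by
      intro p t s w hs hw
      field_simp [hw]
      rw [hw]; ring
    -- elementary certificates
    have certQ1' : ∀ u : Fin r → ℝ, u ≠ 0 →
        (∀ b : Fin n1, (u ᵥ* Q) (Sum.inl (Sum.inl b)) = 0) → False := by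
      intro u hu0 hq1
      set x : (((Fin m1 ⊕ Fin m2) ⊕ Fin m3) ⊕ Fin m4) → ℝ :=
        Sum.elim (Sum.elim (Sum.elim (Pi.single (⟨0, hm1⟩ : Fin m1) 1) 0) 0) 0 with hx
      have hz := pert x u 0 0
        (by intro a b; simp [hx, ri1, ci1, hq1 b])
        (by intro a b; simp [hx, ri2])
        (by intro a b; simp [hx, ri2])
        (by intro a b; simp [hx, ri3])
        (by intro a b; simp [hx, ri3])
        (by intro a b; simp [hx, ri4])
      have h2 : ∀ b : Fin n2, (u ᵥ* Q) (Sum.inl (Sum.inr b)) = 0 := by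
        intro b
        have := hz (Sum.inl (Sum.inl (Sum.inl ⟨0, hm1⟩))) (Sum.inl (Sum.inr b))
        simpa [hx] using this
      have h3 : ∀ b : Fin n3, (u ᵥ* Q) (Sum.inr b) = 0 := by
        intro b
        have := hz (Sum.inl (Sum.inl (Sum.inl ⟨0, hm1⟩))) (Sum.inr b)
        simpa [hx] using this
      have : u ᵥ* Q = 0 := by
        funext j
        rcases j with (b | b) | b
        · exact hq1 b
        · exact h2 b
        · exact h3 b
      exact hu0 (hQinj u this)
    have certQ3' : ∀ u : Fin r → ℝ, u ≠ 0 →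
        (∀ b : Fin n3, (u ᵥ* Q) (Sum.inr b) = 0) → False := by
      intro u hu0 hq3
      set x : (((Fin m1 ⊕ Fin m2) ⊕ Fin m3) ⊕ Fin m4) → ℝ :=
        Sum.elim (Sum.elim (Sum.elim 0 0) 0) (Pi.single (⟨0, hm4⟩ : Fin m4) 1) with hx
      have hz := pert x u 0 0
        (by intro a b; simp [hx, ri1])
        (by intro a b; simp [hx, ri2])
        (by intro a b; simp [hx, ri2])
        (by intro a b; simp [hx, ri3])
        (by intro a b; simp [hx, ri3])
        (by intro a b; simp [hx, ri4, ci3, hq3 b])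
      have h1 : ∀ b : Fin n1, (u ᵥ* Q) (Sum.inl (Sum.inl b)) = 0 := by
        intro b
        have := hz (Sum.inr ⟨0, hm4⟩) (Sum.inl (Sum.inl b))
        simpa [hx] using this
      have h2 : ∀ b : Fin n2, (u ᵥ* Q) (Sum.inl (Sum.inr b)) = 0 := by
        intro b
        have := hz (Sum.inr ⟨0, hm4⟩) (Sum.inl (Sum.inr b))
        simpa [hx] using this
      have : u ᵥ* Q = 0 := by
        funext j
        rcases j with (b | b) | b
        · exact h1 b
        · exact h2 b
        · exact hq3 b
      exact hu0 (hQinj u this)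
    have certRow3 : ∀ u : Fin r → ℝ, u ≠ 0 →
        (∀ b : Fin n2, (u ᵥ* Q) (Sum.inl (Sum.inr b)) = 0) →
        (∀ b : Fin n3, (u ᵥ* Q) (Sum.inr b) = 0) → False := by
      intro u hu0 hq2 hq3
      set x : (((Fin m1 ⊕ Fin m2) ⊕ Fin m3) ⊕ Fin m4) → ℝ :=
        Sum.elim (Sum.elim (Sum.elim 0 0) (Pi.single (⟨0, hm3⟩ : Fin m3) 1)) 0 with hx
      have hz := pert x u 0 0
        (by intro a b; simp [hx, ri1])
        (by intro a b; simp [hx, ri2])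
        (by intro a b; simp [hx, ri2])
        (by intro a b; simp [hx, ri3, ci2, hq2 b])
        (by intro a b; simp [hx, ri3, ci3, hq3 b])
        (by intro a b; simp [hx, ri4])
      have h1 : ∀ b : Fin n1, (u ᵥ* Q) (Sum.inl (Sum.inl b)) = 0 := by
        intro b
        have := hz (Sum.inl (Sum.inr ⟨0, hm3⟩)) (Sum.inl (Sum.inl b))
        simpa [hx] using this
      have : u ᵥ* Q = 0 := by
        funext j
        rcases j with (b | b) | b
        · exact h1 b
        · exact hq2 b
        · exact hq3 b
      exact hu0 (hQinj u this)
    have certCol1 : ∀ v : Fin r → ℝ, v ≠ 0 →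
        (∀ a : Fin m1, (P *ᵥ v) (Sum.inl (Sum.inl (Sum.inl a))) = 0) →
        (∀ a : Fin m2, (P *ᵥ v) (Sum.inl (Sum.inl (Sum.inr a))) = 0) → False := by
      intro v hv0 hp1 hp2
      set y : ((Fin n1 ⊕ Fin n2) ⊕ Fin n3) → ℝ :=
        Sum.elim (Sum.elim (Pi.single (⟨0, hn1⟩ : Fin n1) 1) 0) 0 with hy
      have hz := pert 0 0 v y
        (by intro a b; simp [hy, ri1, ci1, hp1 a])
        (by intro a b; simp [hy, ri2, ci1, hp2 a])
        (by intro a b; simp [hy, ci2])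
        (by intro a b; simp [hy, ci2])
        (by intro a b; simp [hy, ci3])
        (by intro a b; simp [hy, ci3])
      have h3 : ∀ a : Fin m3, (P *ᵥ v) (Sum.inl (Sum.inr a)) = 0 := by
        intro a
        have := hz (Sum.inl (Sum.inr a)) (Sum.inl (Sum.inl ⟨0, hn1⟩))
        simpa [hy] using this
      have h4 : ∀ a : Fin m4, (P *ᵥ v) (Sum.inr a) = 0 := by
        intro a
        have := hz (Sum.inr a) (Sum.inl (Sum.inl ⟨0, hn1⟩))
        simpa [hy] using this
      have : P *ᵥ v = 0 := by
        funext i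
        rcases i with ((a | a) | a) | a
        · exact hp1 a
        · exact hp2 a
        · exact h3 a
        · exact h4 a
      exact hv0 (hPinj v this)
    have certCol2 : ∀ v : Fin r → ℝ, v ≠ 0 →
        (∀ a : Fin m2, (P *ᵥ v) (Sum.inl (Sum.inl (Sum.inr a))) = 0) →
        (∀ a : Fin m3, (P *ᵥ v) (Sum.inl (Sum.inr a)) = 0) → False := by
      intro v hv0 hp2 hp3
      set y : ((Fin n1 ⊕ Fin n2) ⊕ Fin n3) → ℝ :=
        Sum.elim (Sum.elim 0 (Pi.single (⟨0, hn2⟩ : Fin n2) 1)) 0 with hy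
      have hz := pert 0 0 v y
        (by intro a b; simp [hy, ci1])
        (by intro a b; simp [hy, ci1])
        (by intro a b; simp [hy, ri2, ci2, hp2 a])
        (by intro a b; simp [hy, ri3, ci2, hp3 a])
        (by intro a b; simp [hy, ci3])
        (by intro a b; simp [hy, ci3])
      have h1 : ∀ a : Fin m1, (P *ᵥ v) (Sum.inl (Sum.inl (Sum.inl a))) = 0 := by
        intro a
        have := hz (Sum.inl (Sum.inl (Sum.inl a))) (Sum.inl (Sum.inr ⟨0, hn2⟩))
        simpa [hy] using this
      have h4 : ∀ a : Fin m4, (P *ᵥ v) (Sum.inr a) = 0 := by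
        intro a
        have := hz (Sum.inr a) (Sum.inl (Sum.inr ⟨0, hn2⟩))
        simpa [hy] using this
      have : P *ᵥ v = 0 := by
        funext i
        rcases i with ((a | a) | a) | a
        · exact h1 a
        · exact hp2 a
        · exact hp3 a
        · exact h4 a
      exact hv0 (hPinj v this)
    have certCol3 : ∀ v : Fin r → ℝ, v ≠ 0 →
        (∀ a : Fin m3, (P *ᵥ v) (Sum.inl (Sum.inr a)) = 0) →
        (∀ a : Fin m4, (P *ᵥ v) (Sum.inr a) = 0) → False := by
      intro v hv0 hp3 hp4
      set y : ((Fin n1 ⊕ Fin n2) ⊕ Fin n3) → ℝ :=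
        Sum.elim (Sum.elim 0 0) (Pi.single (⟨0, hn3⟩ : Fin n3) 1) with hy
      have hz := pert 0 0 v y
        (by intro a b; simp [hy, ci1])
        (by intro a b; simp [hy, ci1])
        (by intro a b; simp [hy, ci2])
        (by intro a b; simp [hy, ci2])
        (by intro a b; simp [hy, ri3, ci3, hp3 a])
        (by intro a b; simp [hy, ri4, ci3, hp4 a])
      have h1 : ∀ a : Fin m1, (P *ᵥ v) (Sum.inl (Sum.inl (Sum.inl a))) = 0 := by
        intro a
        have := hz (Sum.inl (Sum.inl (Sum.inl a))) (Sum.inr ⟨0, hn3⟩)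
        simpa [hy] using this
      have h2 : ∀ a : Fin m2, (P *ᵥ v) (Sum.inl (Sum.inl (Sum.inr a))) = 0 := by
        intro a
        have := hz (Sum.inl (Sum.inl (Sum.inr a))) (Sum.inr ⟨0, hn3⟩)
        simpa [hy] using this
      have : P *ᵥ v = 0 := by
        funext i
        rcases i with ((a | a) | a) | a
        · exact h1 a
        · exact h2 a
        · exact hp3 a
        · exact hp4 a
      exact hv0 (hPinj v this)
    -- two-sided certificates
    have certT6 : ∀ (v u : Fin r → ℝ) (a3 : Fin m3) (b1 : Fin n1),
        (∀ a : Fin m2, (P *ᵥ v) (Sum.inl (Sum.inl (Sum.inr a))) = 0) →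
        (P *ᵥ v) (Sum.inl (Sum.inr a3)) ≠ 0 →
        (u ᵥ* Q) (Sum.inl (Sum.inl b1)) ≠ 0 → 1 + u ⬝ᵥ v ≠ 0 → False := by
      intro v u a3 b1 hp2 hp3 hq1 hs
      set s : ℝ := 1 + u ⬝ᵥ v with hsdef
      have hw : u ⬝ᵥ v = s - 1 := by rw [hsdef]; ring
      set x : (((Fin m1 ⊕ Fin m2) ⊕ Fin m3) ⊕ Fin m4) → ℝ :=
        Sum.elim (Sum.elim (Sum.elim (fun a => (P *ᵥ v) (Sum.inl (Sum.inl (Sum.inl a)))) 0) 0) 0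
        with hx
      set y : ((Fin n1 ⊕ Fin n2) ⊕ Fin n3) → ℝ :=
        Sum.elim (Sum.elim (fun b => -s⁻¹ * (u ᵥ* Q) (Sum.inl (Sum.inl b))) 0) 0 with hy
      have hz := pert x u v y
        (by
          intro a b
          have hk := cancel_aux ((P *ᵥ v) (Sum.inl (Sum.inl (Sum.inl a))))
            ((u ᵥ* Q) (Sum.inl (Sum.inl b))) s (u ⬝ᵥ v) hs hw
          simpa [hx, hy, ri1, ci1] using hk)
        (by intro a b; simp [hx, hy, ri2, ci1, hp2 a])
        (by intro a b; simp [hx, hy, ri2, ci2, hp2 a])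
        (by intro a b; simp [hx, hy, ri3, ci2])
        (by intro a b; simp [hx, hy, ri3, ci3])
        (by intro a b; simp [hx, hy, ri4, ci3])
      have hfin := hz (Sum.inl (Sum.inr a3)) (Sum.inl (Sum.inl b1))
      have hthis : (P *ᵥ v) (Sum.inl (Sum.inr a3)) * (-s⁻¹ * (u ᵥ* Q) (Sum.inl (Sum.inl b1)))
          = 0 := by
        simpa [hx, hy] using hfin
      have hne : (P *ᵥ v) (Sum.inl (Sum.inr a3)) * (-s⁻¹ * (u ᵥ* Q) (Sum.inl (Sum.inl b1)))
          ≠ 0 := mul_ne_zero hp3 (mul_ne_zero (neg_ne_zero.mpr (inv_ne_zero hs)) hq1)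
      exact hne hthis
    have certT7 : ∀ (v u : Fin r → ℝ) (a2 : Fin m2) (b3 : Fin n3),
        (∀ a : Fin m3, (P *ᵥ v) (Sum.inl (Sum.inr a)) = 0) →
        (P *ᵥ v) (Sum.inl (Sum.inl (Sum.inr a2))) ≠ 0 →
        (u ᵥ* Q) (Sum.inr b3) ≠ 0 → 1 + u ⬝ᵥ v ≠ 0 → False := by
      intro v u a2 b3 hp3 hp2 hq3 hs
      set s : ℝ := 1 + u ⬝ᵥ v with hsdef
      have hw : u ⬝ᵥ v = s - 1 := by rw [hsdef]; ring
      set x : (((Fin m1 ⊕ Fin m2) ⊕ Fin m3) ⊕ Fin m4) → ℝ :=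
        Sum.elim (Sum.elim (Sum.elim 0 0) 0) (fun a => (P *ᵥ v) (Sum.inr a)) with hx
      set y : ((Fin n1 ⊕ Fin n2) ⊕ Fin n3) → ℝ :=
        Sum.elim (Sum.elim 0 0) (fun b => -s⁻¹ * (u ᵥ* Q) (Sum.inr b)) with hy
      have hz := pert x u v y
        (by intro a b; simp [hx, hy, ri1, ci1])
        (by intro a b; simp [hx, hy, ri2, ci1])
        (by intro a b; simp [hx, hy, ri2, ci2])
        (by intro a b; simp [hx, hy, ri3, ci2])
        (by intro a b; simp [hx, hy, ri3, ci3, hp3 a])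
        (by
          intro a b
          have hk := cancel_aux ((P *ᵥ v) (Sum.inr a)) ((u ᵥ* Q) (Sum.inr b)) s (u ⬝ᵥ v) hs hw
          simpa [hx, hy, ri4, ci3] using hk)
      have hfin := hz (Sum.inl (Sum.inl (Sum.inr a2))) (Sum.inr b3)
      have hthis : (P *ᵥ v) (Sum.inl (Sum.inl (Sum.inr a2))) * (-s⁻¹ * (u ᵥ* Q) (Sum.inr b3))
          = 0 := by
        simpa [hx, hy] using hfin
      have hne : (P *ᵥ v) (Sum.inl (Sum.inl (Sum.inr a2))) * (-s⁻¹ * (u ᵥ* Q) (Sum.inr b3))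
          ≠ 0 := mul_ne_zero hp2 (mul_ne_zero (neg_ne_zero.mpr (inv_ne_zero hs)) hq3)
      exact hne hthis
    have certT9 : ∀ (u v : Fin r → ℝ) (b1 : Fin n1) (b3 : Fin n3),
        (∀ b : Fin n2, (u ᵥ* Q) (Sum.inl (Sum.inr b)) = 0) →
        (u ᵥ* Q) (Sum.inl (Sum.inl b1)) ≠ 0 →
        (u ᵥ* Q) (Sum.inr b3) ≠ 0 → v ≠ 0 → 1 + u ⬝ᵥ v ≠ 0 → False := by
      intro u v b1 b3 hq2 hq1 hq3 hv0 hs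
      set s : ℝ := 1 + u ⬝ᵥ v with hsdef
      have hw : u ⬝ᵥ v = s - 1 := by rw [hsdef]; ring
      set x : (((Fin m1 ⊕ Fin m2) ⊕ Fin m3) ⊕ Fin m4) → ℝ :=
        Sum.elim (Sum.elim (Sum.elim (fun a => (P *ᵥ v) (Sum.inl (Sum.inl (Sum.inl a))))
          (fun a => (P *ᵥ v) (Sum.inl (Sum.inl (Sum.inr a))))) 0) 0 with hx
      set y : ((Fin n1 ⊕ Fin n2) ⊕ Fin n3) → ℝ :=
        Sum.elim (Sum.elim (fun b => -s⁻¹ * (u ᵥ* Q) (Sum.inl (Sum.inl b))) 0) 0 with hy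
      have hz := pert x u v y
        (by
          intro a b
          have hk := cancel_aux ((P *ᵥ v) (Sum.inl (Sum.inl (Sum.inl a))))
            ((u ᵥ* Q) (Sum.inl (Sum.inl b))) s (u ⬝ᵥ v) hs hw
          simpa [hx, hy, ri1, ci1] using hk)
        (by
          intro a b
          have hk := cancel_aux ((P *ᵥ v) (Sum.inl (Sum.inl (Sum.inr a))))
            ((u ᵥ* Q) (Sum.inl (Sum.inl b))) s (u ⬝ᵥ v) hs hw
          simpa [hx, hy, ri2, ci1] using hk)
        (by intro a b; simp [hx, hy, ri2, ci2, hq2 b])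
        (by intro a b; simp [hx, hy, ri3, ci2])
        (by intro a b; simp [hx, hy, ri3, ci3])
        (by intro a b; simp [hx, hy, ri4, ci3])
      have hy1ne : -s⁻¹ * (u ᵥ* Q) (Sum.inl (Sum.inl b1)) ≠ 0 :=
        mul_ne_zero (neg_ne_zero.mpr (inv_ne_zero hs)) hq1
      have h1 : ∀ a : Fin m1, (P *ᵥ v) (Sum.inl (Sum.inl (Sum.inl a))) = 0 := by
        intro a
        have hres := hz (Sum.inl (Sum.inl (Sum.inl a))) (Sum.inr b3)
        have h' : (P *ᵥ v) (Sum.inl (Sum.inl (Sum.inl a))) * (u ᵥ* Q) (Sum.inr b3) = 0 := by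
          simpa [hx, hy] using hres
        exact (mul_eq_zero.mp h').resolve_right hq3
      have h2 : ∀ a : Fin m2, (P *ᵥ v) (Sum.inl (Sum.inl (Sum.inr a))) = 0 := by
        intro a
        have hres := hz (Sum.inl (Sum.inl (Sum.inr a))) (Sum.inr b3)
        have h' : (P *ᵥ v) (Sum.inl (Sum.inl (Sum.inr a))) * (u ᵥ* Q) (Sum.inr b3) = 0 := by
          simpa [hx, hy] using hres
        exact (mul_eq_zero.mp h').resolve_right hq3
      have h3 : ∀ a : Fin m3, (P *ᵥ v) (Sum.inl (Sum.inr a)) = 0 := by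
        intro a
        have hres := hz (Sum.inl (Sum.inr a)) (Sum.inl (Sum.inl b1))
        have h' : (P *ᵥ v) (Sum.inl (Sum.inr a))
            * (-s⁻¹ * (u ᵥ* Q) (Sum.inl (Sum.inl b1))) = 0 := by
          simpa [hx, hy] using hres
        exact (mul_eq_zero.mp h').resolve_right hy1ne
      have h4 : ∀ a : Fin m4, (P *ᵥ v) (Sum.inr a) = 0 := by
        intro a
        have hres := hz (Sum.inr a) (Sum.inl (Sum.inl b1))
        have h' : (P *ᵥ v) (Sum.inr a)
            * (-s⁻¹ * (u ᵥ* Q) (Sum.inl (Sum.inl b1))) = 0 := by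
          simpa [hx, hy] using hres
        exact (mul_eq_zero.mp h').resolve_right hy1ne
      have : P *ᵥ v = 0 := by
        funext i
        rcases i with ((a | a) | a) | a
        · exact h1 a
        · exact h2 a
        · exact h3 a
        · exact h4 a
      exact hv0 (hPinj v this)
    -- combined certificates
    have certP2 : ∀ v : Fin r → ℝ, v ≠ 0 →
        (∀ a : Fin m2, (P *ᵥ v) (Sum.inl (Sum.inl (Sum.inr a))) = 0) → False := by
      intro v hv0 hp2
      by_cases hQ1z : Q1 = 0
      · set u1 : Fin r → ℝ := fun k => if k = (⟨0, hr⟩ : Fin r) then 1 else 0 with hu1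
        refine certQ1' u1 ?_ ?_
        · intro hcon
          have := congrFun hcon (⟨0, hr⟩ : Fin r)
          simp [hu1] at this
        · intro b
          have h0 : u1 ᵥ* Q1 = 0 := by rw [hQ1z, Matrix.vecMul_zero]
          exact congrFun h0 b
      · by_cases h1 : ∀ a : Fin m1, (P *ᵥ v) (Sum.inl (Sum.inl (Sum.inl a))) = 0
        · exact certCol1 v hv0 h1 hp2
        · by_cases h3 : ∀ a : Fin m3, (P *ᵥ v) (Sum.inl (Sum.inr a)) = 0
          · exact certCol2 v hv0 hp2 h3
          · push_neg at h3
            obtain ⟨a3, ha3⟩ := h3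
            have hQ1ne : ∃ k b, Q1 k b ≠ 0 := by
              by_contra hcon
              push_neg at hcon
              exact hQ1z (by ext k b; simpa using hcon k b)
            obtain ⟨k0, b1, hkb⟩ := hQ1ne
            set c : ℝ := if 1 + v k0 = 0 then 2 else 1 with hc
            set u : Fin r → ℝ := fun k => if k = k0 then c else 0 with hudef
            have hudot : u ⬝ᵥ v = c * v k0 := by
              rw [hudef]
              simp [dotProduct, ite_mul, Finset.sum_ite_eq']
            have hcne : c ≠ 0 := by
              rw [hc]
              by_cases hd0 : 1 + v k0 = 0 <;> simp [hd0]
            have hs : 1 + u ⬝ᵥ v ≠ 0 := by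
              rw [hudot, hc]
              by_cases hd0 : 1 + v k0 = 0
              · rw [if_pos hd0, show v k0 = -1 by linarith]
                norm_num
              · rw [if_neg hd0, one_mul]
                exact hd0
            have huq1 : (u ᵥ* Q) (Sum.inl (Sum.inl b1)) ≠ 0 := by
              have heq : (u ᵥ* Q) (Sum.inl (Sum.inl b1)) = c * Q1 k0 b1 := by
                rw [hudef]
                simp [Matrix.vecMul, dotProduct, ite_mul, Finset.sum_ite_eq',
                  hQ1def, ci1]
              rw [heq]
              exact mul_ne_zero hcne hkb
            exact certT6 v u a3 b1 hp2 ha3 huq1 hs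
    have certP3 : ∀ v : Fin r → ℝ, v ≠ 0 →
        (∀ a : Fin m3, (P *ᵥ v) (Sum.inl (Sum.inr a)) = 0) → False := by
      intro v hv0 hp3
      by_cases hQ3z : Q3 = 0
      · set u1 : Fin r → ℝ := fun k => if k = (⟨0, hr⟩ : Fin r) then 1 else 0 with hu1
        refine certQ3' u1 ?_ ?_
        · intro hcon
          have := congrFun hcon (⟨0, hr⟩ : Fin r)
          simp [hu1] at this
        · intro b
          have h0 : u1 ᵥ* Q3 = 0 := by rw [hQ3z, Matrix.vecMul_zero]
          exact congrFun h0 b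
      · by_cases h4 : ∀ a : Fin m4, (P *ᵥ v) (Sum.inr a) = 0
        · exact certCol3 v hv0 hp3 h4
        · by_cases h2 : ∀ a : Fin m2, (P *ᵥ v) (Sum.inl (Sum.inl (Sum.inr a))) = 0
          · exact certCol2 v hv0 h2 hp3
          · push_neg at h2
            obtain ⟨a2, ha2⟩ := h2
            have hQ3ne : ∃ k b, Q3 k b ≠ 0 := by
              by_contra hcon
              push_neg at hcon
              exact hQ3z (by ext k b; simpa using hcon k b)
            obtain ⟨k0, b3, hkb⟩ := hQ3ne
            set c : ℝ := if 1 + v k0 = 0 then 2 else 1 with hc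
            set u : Fin r → ℝ := fun k => if k = k0 then c else 0 with hudef
            have hudot : u ⬝ᵥ v = c * v k0 := by
              rw [hudef]
              simp [dotProduct, ite_mul, Finset.sum_ite_eq']
            have hcne : c ≠ 0 := by
              rw [hc]
              by_cases hd0 : 1 + v k0 = 0 <;> simp [hd0]
            have hs : 1 + u ⬝ᵥ v ≠ 0 := by
              rw [hudot, hc]
              by_cases hd0 : 1 + v k0 = 0
              · rw [if_pos hd0, show v k0 = -1 by linarith]
                norm_num
              · rw [if_neg hd0, one_mul]
                exact hd0
            have huq3 : (u ᵥ* Q) (Sum.inr b3) ≠ 0 := by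
              have heq : (u ᵥ* Q) (Sum.inr b3) = c * Q3 k0 b3 := by
                rw [hudef]
                simp [Matrix.vecMul, dotProduct, ite_mul, Finset.sum_ite_eq',
                  hQ3def, ci3]
              rw [heq]
              exact mul_ne_zero hcne hkb
            exact certT7 v u a2 b3 hp3 ha2 huq3 hs
    have certQ2 : ∀ u : Fin r → ℝ, u ≠ 0 →
        (∀ b : Fin n2, (u ᵥ* Q) (Sum.inl (Sum.inr b)) = 0) → False := by
      intro u hu0 hq2
      by_cases h1 : ∀ b : Fin n1, (u ᵥ* Q) (Sum.inl (Sum.inl b)) = 0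
      · exact certQ1' u hu0 h1
      · by_cases h3 : ∀ b : Fin n3, (u ᵥ* Q) (Sum.inr b) = 0
        · exact certRow3 u hu0 hq2 h3
        · push_neg at h1
          push_neg at h3
          obtain ⟨b1, hb1⟩ := h1
          obtain ⟨b3, hb3⟩ := h3
          set k0 : Fin r := ⟨0, hr⟩ with hk0
          set c : ℝ := if 1 + u k0 = 0 then -1 else 1 with hc
          set v : Fin r → ℝ := fun k => if k = k0 then c else 0 with hvdef
          have hcne : c ≠ 0 := by
            rw [hc]
            by_cases hd0 : 1 + u k0 = 0 <;> simp [hd0]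
          have hv0 : v ≠ 0 := by
            intro hcon
            have := congrFun hcon k0
            rw [hvdef] at this
            simp at this
            exact hcne this
          have hudot : u ⬝ᵥ v = u k0 * c := by
            rw [hvdef]
            simp [dotProduct, mul_ite, Finset.sum_ite_eq']
          have hs : 1 + u ⬝ᵥ v ≠ 0 := by
            rw [hudot, hc]
            by_cases hd0 : 1 + u k0 = 0
            · rw [if_pos hd0, show u k0 = -1 by linarith]
              norm_num
            · rw [if_neg hd0, mul_one]
              exact hd0
          exact certT9 u v b1 b3 hq2 hb1 hb3 hv0 hs
    -- conclude the four rank equalities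
    have widthA : A.rank ≤ r := by
      rw [eA]
      exact le_trans (Matrix.rank_mul_le_left _ _)
        (by simpa using Matrix.rank_le_card_width P2)
    have widthG : G.rank ≤ r := by
      rw [eG]
      exact le_trans (Matrix.rank_mul_le_left _ _)
        (by simpa using Matrix.rank_le_card_width P2)
    have widthK : K.rank ≤ r := by
      rw [eK]
      exact le_trans (Matrix.rank_mul_le_left _ _)
        (by simpa using Matrix.rank_le_card_width P3)
    have widthD : D.rank ≤ r := by
      rw [eD]
      exact le_trans (Matrix.rank_mul_le_left _ _)
        (by simpa using Matrix.rank_le_card_width P3)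
    have hcertP2' : P2.rank < r → False := by
      intro hp
      obtain ⟨v, hv0, hvker⟩ := my_mulVec_ker P2 hp
      exact certP2 v hv0 (fun a => congrFun hvker a)
    have hcertP3' : P3.rank < r → False := by
      intro hp
      obtain ⟨v, hv0, hvker⟩ := my_mulVec_ker P3 hp
      exact certP3 v hv0 (fun a => congrFun hvker a)
    have hcertQ1'' : Q1.rank < r → False := by
      intro hq
      obtain ⟨u, hu0, huker⟩ := my_vecMul_ker Q1 hq
      exact certQ1' u hu0 (fun b => congrFun huker b)
    have hcertQ2'' : Q2.rank < r → False := by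
      intro hq
      obtain ⟨u, hu0, huker⟩ := my_vecMul_ker Q2 hq
      exact certQ2 u hu0 (fun b => congrFun huker b)
    have hcertQ3'' : Q3.rank < r → False := by
      intro hq
      obtain ⟨u, hu0, huker⟩ := my_vecMul_ker Q3 hq
      exact certQ3' u hu0 (fun b => congrFun huker b)
    refine ⟨?_, ?_, ?_, ?_⟩
    · by_contra hne
      rcases rank_split P2 Q1 (by rw [← eA]; exact lt_of_le_of_ne widthA hne) with hp | hq
      · exact hcertP2' hp
      · exact hcertQ1'' hq
    · by_contra hne
      rcases rank_split P2 Q2 (by rw [← eG]; exact lt_of_le_of_ne widthG hne) with hp | hq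
      · exact hcertP2' hp
      · exact hcertQ2'' hq
    · by_contra hne
      rcases rank_split P3 Q2 (by rw [← eK]; exact lt_of_le_of_ne widthK hne) with hp | hq
      · exact hcertP3' hp
      · exact hcertQ2'' hq
    · by_contra hne
      rcases rank_split P3 Q3 (by rw [← eD]; exact lt_of_le_of_ne widthD hne) with hp | hq
      · exact hcertP3' hp
      · exact hcertQ3'' hq
  · rintro ⟨hA, hG, hK, hD⟩ H' E' B' C' J' I' hle
    -- factor the completion N and the original M
    obtain ⟨P, Q, hPQ⟩ := my_rank_factor _ hle
    obtain ⟨P0, Q0, hPQ0⟩ := my_rank_factor _ (le_of_eq hM)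
    set P1 := P.submatrix (ri1 (m2 := m2) (m3 := m3) (m4 := m4)) id with hP1def
    set P2 := P.submatrix (ri2 (m1 := m1) (m3 := m3) (m4 := m4)) id with hP2def
    set P3 := P.submatrix (ri3 (m1 := m1) (m2 := m2) (m4 := m4)) id with hP3def
    set P4 := P.submatrix (ri4 (m1 := m1) (m2 := m2) (m3 := m3)) id with hP4def
    set Q1 := Q.submatrix id (ci1 (n2 := n2) (n3 := n3)) with hQ1def
    set Q2 := Q.submatrix id (ci2 (n1 := n1) (n3 := n3)) with hQ2def
    set Q3 := Q.submatrix id (ci3 (n1 := n1) (n2 := n2)) with hQ3def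
    set S1 := P0.submatrix (ri1 (m2 := m2) (m3 := m3) (m4 := m4)) id with hS1def
    set S2 := P0.submatrix (ri2 (m1 := m1) (m3 := m3) (m4 := m4)) id with hS2def
    set S3 := P0.submatrix (ri3 (m1 := m1) (m2 := m2) (m4 := m4)) id with hS3def
    set S4 := P0.submatrix (ri4 (m1 := m1) (m2 := m2) (m3 := m3)) id with hS4def
    set T1 := Q0.submatrix id (ci1 (n2 := n2) (n3 := n3)) with hT1def
    set T2 := Q0.submatrix id (ci2 (n1 := n1) (n3 := n3)) with hT2def
    set T3 := Q0.submatrix id (ci3 (n1 := n1) (n2 := n2)) with hT3def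
    -- block identities for N
    have eF : F = P1 * Q1 := blk_factor _ P Q hPQ _ _ F (fun x y => rfl)
    have eH' : H' = P1 * Q2 := blk_factor _ P Q hPQ _ _ H' (fun x y => rfl)
    have eE' : E' = P1 * Q3 := blk_factor _ P Q hPQ _ _ E' (fun x y => rfl)
    have eA : A = P2 * Q1 := blk_factor _ P Q hPQ _ _ A (fun x y => rfl)
    have eG : G = P2 * Q2 := blk_factor _ P Q hPQ _ _ G (fun x y => rfl)
    have eB' : B' = P2 * Q3 := blk_factor _ P Q hPQ _ _ B' (fun x y => rfl)
    have eC' : C' = P3 * Q1 := blk_factor _ P Q hPQ _ _ C' (fun x y => rfl)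
    have eK : K = P3 * Q2 := blk_factor _ P Q hPQ _ _ K (fun x y => rfl)
    have eD : D = P3 * Q3 := blk_factor _ P Q hPQ _ _ D (fun x y => rfl)
    have eJ' : J' = P4 * Q1 := blk_factor _ P Q hPQ _ _ J' (fun x y => rfl)
    have eI' : I' = P4 * Q2 := blk_factor _ P Q hPQ _ _ I' (fun x y => rfl)
    have eL : L = P4 * Q3 := blk_factor _ P Q hPQ _ _ L (fun x y => rfl)
    -- block identities for M
    have fF : F = S1 * T1 := blk_factor _ P0 Q0 hPQ0 _ _ F (fun x y => rfl)
    have fH : H = S1 * T2 := blk_factor _ P0 Q0 hPQ0 _ _ H (fun x y => rfl)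
    have fE : E = S1 * T3 := blk_factor _ P0 Q0 hPQ0 _ _ E (fun x y => rfl)
    have fA : A = S2 * T1 := blk_factor _ P0 Q0 hPQ0 _ _ A (fun x y => rfl)
    have fG : G = S2 * T2 := blk_factor _ P0 Q0 hPQ0 _ _ G (fun x y => rfl)
    have fB : B = S2 * T3 := blk_factor _ P0 Q0 hPQ0 _ _ B (fun x y => rfl)
    have fC : C = S3 * T1 := blk_factor _ P0 Q0 hPQ0 _ _ C (fun x y => rfl)
    have fK : K = S3 * T2 := blk_factor _ P0 Q0 hPQ0 _ _ K (fun x y => rfl)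
    have fD : D = S3 * T3 := blk_factor _ P0 Q0 hPQ0 _ _ D (fun x y => rfl)
    have fJ : J = S4 * T1 := blk_factor _ P0 Q0 hPQ0 _ _ J (fun x y => rfl)
    have fI : I = S4 * T2 := blk_factor _ P0 Q0 hPQ0 _ _ I (fun x y => rfl)
    have fL : L = S4 * T3 := blk_factor _ P0 Q0 hPQ0 _ _ L (fun x y => rfl)
    -- full rank of the factors
    obtain ⟨L2, hL2⟩ := my_left_inv P2 (rank_left_of_mul _ _ (eA ▸ hA))
    obtain ⟨R1, hR1⟩ := my_right_inv Q1 (rank_right_of_mul _ _ (eA ▸ hA))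
    obtain ⟨R2, hR2⟩ := my_right_inv Q2 (rank_right_of_mul _ _ (eG ▸ hG))
    obtain ⟨L3, hL3⟩ := my_left_inv P3 (rank_left_of_mul _ _ (eK ▸ hK))
    obtain ⟨R3, hR3⟩ := my_right_inv Q3 (rank_right_of_mul _ _ (eD ▸ hD))
    obtain ⟨L2', hL2'⟩ := my_left_inv S2 (rank_left_of_mul _ _ (fA ▸ hA))
    obtain ⟨R1', hR1'⟩ := my_right_inv T1 (rank_right_of_mul _ _ (fA ▸ hA))
    obtain ⟨R2', hR2'⟩ := my_right_inv T2 (rank_right_of_mul _ _ (fG ▸ hG))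
    obtain ⟨L3', hL3'⟩ := my_left_inv S3 (rank_left_of_mul _ _ (fK ▸ hK))
    obtain ⟨R3', hR3'⟩ := my_right_inv T3 (rank_right_of_mul _ _ (fD ▸ hD))
    -- kernel lemmas
    have kAF : ∀ (τ : Type) (Z : Matrix (Fin n1) τ ℝ), A * Z = 0 → F * Z = 0 := by
      intro τ Z h
      have h2 : P2 * (Q1 * Z) = 0 := by rw [← Matrix.mul_assoc, ← eA]; exact h
      have h3 : Q1 * Z = 0 := by
        rw [← Matrix.one_mul (Q1 * Z), ← hL2, Matrix.mul_assoc, h2, Matrix.mul_zero]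
      rw [eF, Matrix.mul_assoc, h3, Matrix.mul_zero]
    have kGA : ∀ (τ : Type) (Z : Matrix τ (Fin m2) ℝ), Z * G = 0 → Z * A = 0 := by
      intro τ Z h
      have h2 : (Z * P2) * Q2 = 0 := by rw [Matrix.mul_assoc, ← eG]; exact h
      have h3 : Z * P2 = 0 := by
        rw [← Matrix.mul_one (Z * P2), ← hR2, ← Matrix.mul_assoc, h2, Matrix.zero_mul]
      rw [eA, ← Matrix.mul_assoc, h3, Matrix.zero_mul]
    have kKD : ∀ (τ : Type) (Z : Matrix τ (Fin m3) ℝ), Z * K = 0 → Z * D = 0 := by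
      intro τ Z h
      have h2 : (Z * P3) * Q2 = 0 := by rw [Matrix.mul_assoc, ← eK]; exact h
      have h3 : Z * P3 = 0 := by
        rw [← Matrix.mul_one (Z * P3), ← hR2, ← Matrix.mul_assoc, h2, Matrix.zero_mul]
      rw [eD, ← Matrix.mul_assoc, h3, Matrix.zero_mul]
    have kDL : ∀ (τ : Type) (Z : Matrix (Fin n3) τ ℝ), D * Z = 0 → L * Z = 0 := by
      intro τ Z h
      have h2 : P3 * (Q3 * Z) = 0 := by rw [← Matrix.mul_assoc, ← eD]; exact h
      have h3 : Q3 * Z = 0 := by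
        rw [← Matrix.one_mul (Q3 * Z), ← hL3, Matrix.mul_assoc, h2, Matrix.mul_zero]
      rw [eL, Matrix.mul_assoc, h3, Matrix.mul_zero]
    have kDC : ∀ (τ : Type) (Z : Matrix τ (Fin m3) ℝ), Z * D = 0 → Z * C = 0 := by
      intro τ Z h
      have h2 : (Z * S3) * T3 = 0 := by rw [Matrix.mul_assoc, ← fD]; exact h
      have h3 : Z * S3 = 0 := by
        rw [← Matrix.mul_one (Z * S3), ← hR3', ← Matrix.mul_assoc, h2, Matrix.zero_mul]
      rw [fC, ← Matrix.mul_assoc, h3, Matrix.zero_mul]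
    -- H'
    have hGW : A * (R1 * Q2) = G := by
      rw [eA, Matrix.mul_assoc, ← Matrix.mul_assoc Q1 R1 Q2, hR1, Matrix.one_mul, ← eG]
    have hHW : F * (R1 * Q2) = H' := by
      rw [eF, Matrix.mul_assoc, ← Matrix.mul_assoc Q1 R1 Q2, hR1, Matrix.one_mul, ← eH']
    have hGW0 : A * (R1' * T2) = G := by
      rw [fA, Matrix.mul_assoc, ← Matrix.mul_assoc T1 R1' T2, hR1', Matrix.one_mul, ← fG]
    have hHW0 : F * (R1' * T2) = H := by
      rw [fF, Matrix.mul_assoc, ← Matrix.mul_assoc T1 R1' T2, hR1', Matrix.one_mul, ← fH]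
    have hW1 : F * (R1 * Q2 - R1' * T2) = 0 := by
      apply kAF
      rw [Matrix.mul_sub, hGW, hGW0, sub_self]
    have hHeq : H' = H := by
      have : H' - H = 0 := by rw [← hHW, ← hHW0, ← Matrix.mul_sub]; exact hW1
      exact sub_eq_zero.mp this
    -- C'
    have hKY : (P3 * L2) * G = K := by
      rw [eG, ← Matrix.mul_assoc, Matrix.mul_assoc P3 L2 P2, hL2, Matrix.mul_one, ← eK]
    have hCY : (P3 * L2) * A = C' := by
      rw [eA, ← Matrix.mul_assoc, Matrix.mul_assoc P3 L2 P2, hL2, Matrix.mul_one, ← eC']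
    have hKY0 : (S3 * L2') * G = K := by
      rw [fG, ← Matrix.mul_assoc, Matrix.mul_assoc S3 L2' S2, hL2', Matrix.mul_one, ← fK]
    have hCY0 : (S3 * L2') * A = C := by
      rw [fA, ← Matrix.mul_assoc, Matrix.mul_assoc S3 L2' S2, hL2', Matrix.mul_one, ← fC]
    have hCeq : C' = C := by
      have h0 : (P3 * L2 - S3 * L2') * A = 0 := by
        apply kGA
        rw [Matrix.sub_mul, hKY, hKY0, sub_self]
      have : C' - C = 0 := by rw [← hCY, ← hCY0, ← Matrix.sub_mul]; exact h0
      exact sub_eq_zero.mp this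
    -- B'
    have hGY : (P2 * L3) * K = G := by
      rw [eK, ← Matrix.mul_assoc, Matrix.mul_assoc P2 L3 P3, hL3, Matrix.mul_one, ← eG]
    have hBY : (P2 * L3) * D = B' := by
      rw [eD, ← Matrix.mul_assoc, Matrix.mul_assoc P2 L3 P3, hL3, Matrix.mul_one, ← eB']
    have hGY0 : (S2 * L3') * K = G := by
      rw [fK, ← Matrix.mul_assoc, Matrix.mul_assoc S2 L3' S3, hL3', Matrix.mul_one, ← fG]
    have hBY0 : (S2 * L3') * D = B := by
      rw [fD, ← Matrix.mul_assoc, Matrix.mul_assoc S2 L3' S3, hL3', Matrix.mul_one, ← fB]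
    have hBeq : B' = B := by
      have h0 : (P2 * L3 - S2 * L3') * D = 0 := by
        apply kKD
        rw [Matrix.sub_mul, hGY, hGY0, sub_self]
      have : B' - B = 0 := by rw [← hBY, ← hBY0, ← Matrix.sub_mul]; exact h0
      exact sub_eq_zero.mp this
    -- I'
    have hKW : D * (R3 * Q2) = K := by
      rw [eD, Matrix.mul_assoc, ← Matrix.mul_assoc Q3 R3 Q2, hR3, Matrix.one_mul, ← eK]
    have hIW : L * (R3 * Q2) = I' := by
      rw [eL, Matrix.mul_assoc, ← Matrix.mul_assoc Q3 R3 Q2, hR3, Matrix.one_mul, ← eI']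
    have hKW0 : D * (R3' * T2) = K := by
      rw [fD, Matrix.mul_assoc, ← Matrix.mul_assoc T3 R3' T2, hR3', Matrix.one_mul, ← fK]
    have hIW0 : L * (R3' * T2) = I := by
      rw [fL, Matrix.mul_assoc, ← Matrix.mul_assoc T3 R3' T2, hR3', Matrix.one_mul, ← fI]
    have hIeq : I' = I := by
      have h0 : L * (R3 * Q2 - R3' * T2) = 0 := by
        apply kDL
        rw [Matrix.mul_sub, hKW, hKW0, sub_self]
      have : I' - I = 0 := by rw [← hIW, ← hIW0, ← Matrix.mul_sub]; exact h0
      exact sub_eq_zero.mp this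
    -- E'
    have hBW : G * (R2 * Q3) = B' := by
      rw [eG, Matrix.mul_assoc, ← Matrix.mul_assoc Q2 R2 Q3, hR2, Matrix.one_mul, ← eB']
    have hEW : F * ((R1 * Q2) * (R2 * Q3)) = E' := by
      rw [← Matrix.mul_assoc, hHW, eH', Matrix.mul_assoc, ← Matrix.mul_assoc Q2 R2 Q3, hR2,
        Matrix.one_mul, ← eE']
    have hBW0 : G * (R2' * T3) = B := by
      rw [fG, Matrix.mul_assoc, ← Matrix.mul_assoc T2 R2' T3, hR2', Matrix.one_mul, ← fB]
    have hEW0 : F * ((R1' * T2) * (R2' * T3)) = E := by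
      rw [← Matrix.mul_assoc, hHW0, fH, Matrix.mul_assoc, ← Matrix.mul_assoc T2 R2' T3, hR2',
        Matrix.one_mul, ← fE]
    have hEeq : E' = E := by
      have t1 : F * ((R1 * Q2) * ((R2 * Q3) - (R2' * T3))) = 0 := by
        apply kAF
        rw [← Matrix.mul_assoc, hGW, Matrix.mul_sub, hBW, hBW0, hBeq, sub_self]
      have t2 : F * ((R1 * Q2 - R1' * T2) * (R2' * T3)) = 0 := by
        rw [← Matrix.mul_assoc, hW1, Matrix.zero_mul]
      have hsum : E' - E = F * ((R1 * Q2) * ((R2 * Q3) - (R2' * T3)))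
          + F * ((R1 * Q2 - R1' * T2) * (R2' * T3)) := by
        rw [← hEW, ← hEW0]
        simp only [Matrix.mul_sub, Matrix.sub_mul]
        abel
      rw [t1, t2, add_zero] at hsum
      exact sub_eq_zero.mp hsum
    -- J'
    have hJY : (P4 * L3) * C' = J' := by
      rw [eC', ← Matrix.mul_assoc, Matrix.mul_assoc P4 L3 P3, hL3, Matrix.mul_one, ← eJ']
    have hLY : (P4 * L3) * D = L := by
      rw [eD, ← Matrix.mul_assoc, Matrix.mul_assoc P4 L3 P3, hL3, Matrix.mul_one, ← eL]
    have hJY0 : (S4 * L3') * C = J := by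
      rw [fC, ← Matrix.mul_assoc, Matrix.mul_assoc S4 L3' S3, hL3', Matrix.mul_one, ← fJ]
    have hLY0 : (S4 * L3') * D = L := by
      rw [fD, ← Matrix.mul_assoc, Matrix.mul_assoc S4 L3' S3, hL3', Matrix.mul_one, ← fL]
    have hJeq : J' = J := by
      have h0 : ((P4 * L3) - (S4 * L3')) * C = 0 := by
        apply kDC
        rw [Matrix.sub_mul, hLY, hLY0, sub_self]
      have : J' - J = 0 := by rw [← hJY, ← hJY0, hCeq, ← Matrix.sub_mul]; exact h0
      exact sub_eq_zero.mp this
    exact ⟨hHeq, hEeq, hBeq, hCeq, hJeq, hIeq⟩
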